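/- Suppose A and A+E are p×p real symmetric matrices and Q = (Q1, Q2) is a p×p real orthogonal matrix, where Q1 has size p×r (1 ≤ r < p) and the column space C(Q1) is invariant for A. Set D1 = Q1ᵀAQ1 and D2 = Q2ᵀAQ2. If sep(D1,D2) > 0 and ‖E‖₂ ≤ sep(D1,D2)/5, then there exists a p×r real matrix Q̂1 with orthonormal columns (Q̂1ᵀQ̂1 = I_r) whose column space C(Q̂1) is invariant for A+E and such that M(C(Q1), C(Q̂1)) ≤ 4√2·‖E‖₂ / sep(D1,D2). -/

import Mathlib

open Matrix

/-- Spectral (ℓ²-operator) norm of a real matrix. -/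
noncomputable def specNorm {m n : ℕ} (M : Matrix (Fin m) (Fin n) ℝ) : ℝ :=
  ‖LinearMap.toContinuousLinearMap (Matrix.toEuclideanLin M)‖

/-- `μ` is an eigenvalue of the real matrix `S`. -/
def IsEigenvalue {n : ℕ} (S : Matrix (Fin n) (Fin n) ℝ) (μ : ℝ) : Prop :=
  ∃ v : Fin n → ℝ, v ≠ 0 ∧ S.mulVec v = μ • v

/-- Eigenvalue separation `sep(D1, D2) = min { |μ - ν| : μ ∈ l(D1), ν ∈ l(D2) }`. -/
noncomputable def sep {m n : ℕ} (D1 : Matrix (Fin m) (Fin m) ℝ)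
    (D2 : Matrix (Fin n) (Fin n) ℝ) : ℝ :=
  sInf {d : ℝ | ∃ μ ν : ℝ, IsEigenvalue D1 μ ∧ IsEigenvalue D2 ν ∧ d = |μ - ν|}

/-- The column space of `B` is an invariant subspace for `A`. -/
def InvariantColSpace {p r : ℕ} (A : Matrix (Fin p) (Fin p) ℝ)
    (B : Matrix (Fin p) (Fin r) ℝ) : Prop :=
  ∀ v ∈ LinearMap.range B.mulVecLin, A.mulVec v ∈ LinearMap.range B.mulVecLin

/-- The distance `M(C(B1), C(B2)) = sqrt(1 - (1/r) tr(B1 B1ᵀ B2 B2ᵀ))` between the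
column spaces of two half-orthogonal `p × r` matrices. -/
noncomputable def Mdist {p r : ℕ} (B1 B2 : Matrix (Fin p) (Fin r) ℝ) : ℝ :=
  Real.sqrt (1 - (1 / (r : ℝ)) * (B1 * B1ᵀ * B2 * B2ᵀ).trace)



open Matrix Finset

open scoped Classical

section Helpers

variable {n : Type*} [Fintype n] [DecidableEq n]

/-- Spectral decomposition of a real symmetric matrix in `M * U = U * diagonal d` form. -/
lemma exists_spec_decomp (M : Matrix n n ℝ) (hM : M.IsSymm) :
    ∃ (U : Matrix n n ℝ) (d : n → ℝ),
      Uᵀ * U = 1 ∧ U * Uᵀ = 1 ∧ M * U = U * Matrix.diagonal d := by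
  have hherm : M.IsHermitian := by
    rw [Matrix.IsHermitian, Matrix.conjTranspose_eq_transpose_of_trivial]; exact hM
  refine ⟨hherm.eigenvectorUnitary, hherm.eigenvalues, ?_, ?_, ?_⟩
  · have h := Matrix.mem_unitaryGroup_iff'.mp hherm.eigenvectorUnitary.2
    rwa [← Matrix.conjTranspose_eq_transpose_of_trivial, ← Matrix.star_eq_conjTranspose]
  · have h := Matrix.mem_unitaryGroup_iff.mp hherm.eigenvectorUnitary.2
    rwa [← Matrix.conjTranspose_eq_transpose_of_trivial, ← Matrix.star_eq_conjTranspose]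
  · have h : star (hherm.eigenvectorUnitary : Matrix n n ℝ) * M *
        (hherm.eigenvectorUnitary : Matrix n n ℝ) =
        Matrix.diagonal (RCLike.ofReal ∘ hherm.eigenvalues) := by
      have h0 := hherm.conjStarAlgAut_star_eigenvectorUnitary
      rw [Unitary.conjStarAlgAut_apply] at h0
      simpa using h0
    have h2 := congrArg (fun X => (hherm.eigenvectorUnitary : Matrix n n ℝ) * X) h
    rw [← Matrix.mul_assoc, ← Matrix.mul_assoc,
      Matrix.mem_unitaryGroup_iff.mp hherm.eigenvectorUnitary.2] at h2
    have : (RCLike.ofReal ∘ hherm.eigenvalues : n → ℝ) = hherm.eigenvalues := by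
      funext i; simp
    rw [one_mul] at h2
    rw [h2, this]

end Helpers


section DimCount

variable {n : Type*} [Fintype n] [DecidableEq n]

lemma col_dot_col {B : Matrix n n ℝ} (hB1 : Bᵀ * B = 1) (i i' : n) :
    (fun k => B k i) ⬝ᵥ (fun k => B k i') = if i = i' then (1:ℝ) else 0 := by
  have := congrFun (congrFun hB1 i) i'
  simp only [Matrix.mul_apply, Matrix.transpose_apply, Matrix.one_apply] at this
  simpa [dotProduct] using this

lemma span_rep (B : Matrix n n ℝ) (hB1 : Bᵀ * B = 1) (P : Finset n) :
    ∀ w ∈ Submodule.span ℝ (Set.range (fun i : P => (fun k => B k (i : n)))),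
      (∀ i, i ∉ P → (fun k => B k i) ⬝ᵥ w = 0) ∧ w = B.mulVec (Bᵀ.mulVec w) := by
  intro w hw
  induction hw using Submodule.span_induction with
  | mem x hx =>
    obtain ⟨i0, rfl⟩ := hx
    have hjj : ∀ j, (∑ k', B k' j * B k' (i0 : n)) = if j = (i0:n) then (1:ℝ) else 0 := by
      intro j
      have := col_dot_col hB1 j (i0 : n)
      simpa [dotProduct] using this
    constructor
    · intro i hi
      rw [col_dot_col hB1]
      simp only [ite_eq_right_iff]
      intro h; exact absurd (h ▸ i0.2) hi
    · funext k
      simp only [Matrix.mulVec, dotProduct, Matrix.transpose_apply]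
      rw [Finset.sum_congr rfl (fun j _ => by rw [hjj j])]
      simp
  | zero => constructor <;> simp [Matrix.mulVec_zero]
  | add x y hx hy ihx ihy =>
    refine ⟨fun i hi => ?_, ?_⟩
    · rw [dotProduct_add, ihx.1 i hi, ihy.1 i hi, add_zero]
    · rw [Matrix.mulVec_add, Matrix.mulVec_add, ← ihx.2, ← ihy.2]
  | smul a x hx ihx =>
    refine ⟨fun i hi => ?_, ?_⟩
    · rw [dotProduct_smul, ihx.1 i hi, smul_zero]
    · rw [Matrix.mulVec_smul, Matrix.mulVec_smul, ← ihx.2]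

lemma span_quadratic_le
    (Mm B : Matrix n n ℝ) (f : n → ℝ) (P : Finset n)
    (hB1 : Bᵀ * B = 1) (hMB : Mm * B = B * Matrix.diagonal f)
    (α : ℝ) (hfP : ∀ i ∈ P, f i ≤ α)
    (v : n → ℝ)
    (hv : v ∈ Submodule.span ℝ (Set.range (fun i : P => (fun k => B k (i : n))))) :
    v ⬝ᵥ Mm.mulVec v ≤ α * (v ⬝ᵥ v) := by
  obtain ⟨hvanish0, hrep0⟩ := span_rep B hB1 P v hv
  set c : n → ℝ := Bᵀ.mulVec v with hc
  have hvanish : ∀ i, i ∉ P → c i = 0 := by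
    intro i hi
    have := hvanish0 i hi
    simpa [hc, Matrix.mulVec, dotProduct] using this
  have hrep : v = B.mulVec c := hrep0
  have hdotB : ∀ x : n → ℝ, v ⬝ᵥ B.mulVec x = c ⬝ᵥ x := by
    intro x
    rw [dotProduct_mulVec]
    congr 1
    funext i
    simp [Matrix.vecMul, dotProduct, hc, Matrix.mulVec, mul_comm]
  have hMv : Mm.mulVec v = B.mulVec ((Matrix.diagonal f).mulVec c) := by
    conv_lhs => rw [hrep]
    rw [Matrix.mulVec_mulVec, hMB, ← Matrix.mulVec_mulVec]
  have hquad : v ⬝ᵥ Mm.mulVec v = ∑ i, f i * c i ^ 2 := by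
    rw [hMv, hdotB]
    simp only [dotProduct, Matrix.mulVec_diagonal]
    apply Finset.sum_congr rfl; intro i _; ring
  have hnorm : v ⬝ᵥ v = ∑ i, c i ^ 2 := by
    have h1 : v ⬝ᵥ v = v ⬝ᵥ B.mulVec c := by nth_rewrite 2 [hrep]; rfl
    rw [h1, hdotB]
    simp only [dotProduct]
    apply Finset.sum_congr rfl; intro i _; ring
  rw [hquad, hnorm, Finset.mul_sum]
  apply Finset.sum_le_sum
  intro i _
  by_cases hi : i ∈ P
  · exact mul_le_mul_of_nonneg_right (hfP i hi) (sq_nonneg _)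
  · rw [hvanish i hi]; simp

lemma span_quadratic_ge
    (Mm B : Matrix n n ℝ) (f : n → ℝ) (P : Finset n)
    (hB1 : Bᵀ * B = 1) (hMB : Mm * B = B * Matrix.diagonal f)
    (β : ℝ) (hfP : ∀ i ∈ P, β ≤ f i)
    (v : n → ℝ)
    (hv : v ∈ Submodule.span ℝ (Set.range (fun i : P => (fun k => B k (i : n))))) :
    β * (v ⬝ᵥ v) ≤ v ⬝ᵥ Mm.mulVec v := by
  have hneg : (-Mm) * B = B * Matrix.diagonal (-f) := by
    rw [Matrix.neg_mul, hMB]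
    ext i j
    rw [Matrix.neg_apply, Matrix.mul_diagonal, Matrix.mul_diagonal]
    simp
  have h := span_quadratic_le (-Mm) B (-f) P hB1 hneg (-β)
    (fun i hi => by simpa using hfP i hi) v hv
  rw [Matrix.neg_mulVec, dotProduct_neg] at h
  linarith

lemma orthonormal_linearIndependent (B : Matrix n n ℝ) (hB1 : Bᵀ * B = 1) (P : Finset n) :
    LinearIndependent ℝ (fun i : P => (fun k => B k (i : n))) := by
  rw [Fintype.linearIndependent_iff]
  intro gc hgc i0
  have hk : ∀ k, (∑ i : P, gc i * B k (i : n)) = 0 := by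
    intro k
    have := congrFun hgc k
    simpa [Finset.sum_apply] using this
  have h2 : ∑ k, B k (i0 : n) * (∑ i : P, gc i * B k (i : n)) = 0 := by
    simp only [hk, mul_zero, Finset.sum_const_zero]
  have e1 : ∀ k : n, B k (i0:n) * (∑ i : P, gc i * B k (i:n))
      = ∑ i : P, gc i * (B k (i0:n) * B k (i:n)) := by
    intro k; rw [Finset.mul_sum]; apply Finset.sum_congr rfl; intros; ring
  rw [Finset.sum_congr rfl (fun k _ => e1 k), Finset.sum_comm] at h2
  have e2 : ∀ i : P, (∑ k, gc i * (B k (i0:n) * B k (i:n)))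
      = gc i * (if (i0:n) = (i:n) then (1:ℝ) else 0) := by
    intro i; rw [← Finset.mul_sum]; congr 1
    have := col_dot_col hB1 (i0:n) (i:n)
    simpa [dotProduct] using this
  rw [Finset.sum_congr rfl (fun i _ => e2 i)] at h2
  rw [Finset.sum_eq_single i0] at h2
  · simpa using h2
  · intro b _ hb
    have hne : (i0:n) ≠ (b:n) := fun h => hb (Subtype.coe_injective h).symm
    simp [hne]
  · intro h; exact absurd (Finset.mem_univ i0) h

lemma card_le_card_of_gap
    (Mm Nn B C : Matrix n n ℝ) (f g : n → ℝ) (P Q : Finset n)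
    (hB1 : Bᵀ * B = 1) (hC1 : Cᵀ * C = 1)
    (hMB : Mm * B = B * Matrix.diagonal f) (hNC : Nn * C = C * Matrix.diagonal g)
    (α β c : ℝ) (hαβ : α + c < β)
    (hfP : ∀ i ∈ P, f i ≤ α) (hgQ : ∀ j, j ∉ Q → β ≤ g j)
    (hform : ∀ v : n → ℝ, v ⬝ᵥ Nn.mulVec v ≤ v ⬝ᵥ Mm.mulVec v + c * (v ⬝ᵥ v)) :
    P.card ≤ Q.card := by
  by_contra hlt
  push_neg at hlt
  set V : Submodule ℝ (n → ℝ) :=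
    Submodule.span ℝ (Set.range (fun i : P => (fun k => B k (i : n)))) with hVdef
  set W' : Submodule ℝ (n → ℝ) :=
    Submodule.span ℝ (Set.range (fun j : (Qᶜ : Finset n) => (fun k => C k (j : n)))) with hWdef
  have hVrank : Module.finrank ℝ V = P.card := by
    rw [hVdef, finrank_span_eq_card (orthonormal_linearIndependent B hB1 P)]
    exact Fintype.card_coe P
  have hWrank : Module.finrank ℝ W' = (Qᶜ : Finset n).card := by
    rw [hWdef, finrank_span_eq_card (orthonormal_linearIndependent C hC1 Qᶜ)]
    exact Fintype.card_coe _
  have hsum := Submodule.finrank_sup_add_finrank_inf_eq V W'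
  have hsuple : Module.finrank ℝ ↥(V ⊔ W') ≤ Fintype.card n := by
    have h1 := Submodule.finrank_le (V ⊔ W')
    rwa [Module.finrank_pi ℝ] at h1
  have hcompl : (Qᶜ : Finset n).card = Fintype.card n - Q.card := Finset.card_compl Q
  have hQle : Q.card ≤ Fintype.card n := Finset.card_le_univ Q
  have hPle : P.card ≤ Fintype.card n := Finset.card_le_univ P
  have hposrank : 0 < Module.finrank ℝ ↥(V ⊓ W') := by omega
  have hne : V ⊓ W' ≠ ⊥ := by
    intro h
    rw [h, finrank_bot] at hposrank
    exact lt_irrefl 0 hposrank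
  obtain ⟨v, hvmem, hvne⟩ := Submodule.exists_mem_ne_zero_of_ne_bot hne
  have hq1 : v ⬝ᵥ Mm.mulVec v ≤ α * (v ⬝ᵥ v) :=
    span_quadratic_le Mm B f P hB1 hMB α hfP v hvmem.1
  have hq2 : β * (v ⬝ᵥ v) ≤ v ⬝ᵥ Nn.mulVec v :=
    span_quadratic_ge Nn C g Qᶜ hC1 hNC β (fun j hj => hgQ j (by simpa using hj)) v hvmem.2
  have hvv : 0 < v ⬝ᵥ v := by
    have h1 : v ⬝ᵥ v = ∑ k, v k * v k := rfl
    rw [h1]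
    apply Finset.sum_pos' (fun k _ => mul_self_nonneg _)
    obtain ⟨k, hk⟩ := Function.ne_iff.mp hvne
    exact ⟨k, Finset.mem_univ k, mul_self_pos.mpr hk⟩
  have h3 := hform v
  nlinarith

end DimCount

section Stab

set_option linter.unusedSectionVars false

variable {n : Type*} [Fintype n] [DecidableEq n]

lemma transpose_mulVec_dot (M : Matrix n n ℝ) (x y : n → ℝ) :
    (Mᵀ.mulVec x) ⬝ᵥ y = x ⬝ᵥ (M.mulVec y) := by
  simp only [dotProduct, Matrix.mulVec, dotProduct, Matrix.transpose_apply,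
    Finset.sum_mul, Finset.mul_sum]
  rw [Finset.sum_comm]
  apply Finset.sum_congr rfl; intro i _
  apply Finset.sum_congr rfl; intro k _
  ring

lemma mulVec_dot_mulVec_of_orth {U : Matrix n n ℝ} (hU1 : Uᵀ * U = 1) (x y : n → ℝ) :
    (U.mulVec x) ⬝ᵥ (U.mulVec y) = x ⬝ᵥ y := by
  have h := transpose_mulVec_dot Uᵀ x (U.mulVec y)
  rw [Matrix.transpose_transpose] at h
  rw [h, Matrix.mulVec_mulVec, hU1, Matrix.one_mulVec]

lemma col_mul (P Q : Matrix n n ℝ) (i : n) :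
    (fun j => (P * Q) j i) = P.mulVec (fun l => Q l i) := by
  funext j
  simp [Matrix.mul_apply, Matrix.mulVec, dotProduct]

lemma resolvent_lemma
    (A E U W : Matrix n n ℝ) (d e : n → ℝ) (ε : ℝ) (hε : 0 ≤ ε)
    (hU1 : Uᵀ * U = 1) (hUU : U * Uᵀ = 1) (hAU : A * U = U * Matrix.diagonal d)
    (hW1 : Wᵀ * W = 1) (hAEW : (A + E) * W = W * Matrix.diagonal e)
    (hEop : ∀ v : n → ℝ, (E.mulVec v) ⬝ᵥ (E.mulVec v) ≤ ε^2 * (v ⬝ᵥ v))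
    (j : n) : ∃ i, |e j - d i| ≤ ε := by
  by_contra hcon
  push_neg at hcon
  set w : n → ℝ := fun k => W k j with hw
  have hww : w ⬝ᵥ w = 1 := by
    have h := congrFun (congrFun hW1 j) j
    simp only [Matrix.mul_apply, Matrix.transpose_apply, Matrix.one_apply_eq] at h
    simpa [dotProduct, hw] using h
  set c : n → ℝ := Uᵀ.mulVec w with hc
  have hwc : w = U.mulVec c := by
    rw [hc, Matrix.mulVec_mulVec, hUU, Matrix.one_mulVec]
  have hcc : c ⬝ᵥ c = 1 := by
    have h := mulVec_dot_mulVec_of_orth hU1 c c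
    rw [← hwc] at h
    rw [← h, hww]
  have heig : (A + E).mulVec w = fun k => e j * w k := by
    funext k
    have h1 := congrFun (congrFun hAEW k) j
    simp only [Matrix.mul_apply] at h1
    have h2 : ((A + E).mulVec w) k = ∑ l, (A + E) k l * W l j := by
      simp [Matrix.mulVec, dotProduct, hw]
    rw [h2, h1]
    simp only [Matrix.diagonal, Matrix.of_apply, mul_ite, mul_zero]
    rw [Finset.sum_ite_eq' Finset.univ j (fun l => W k l * e l)]
    simp [hw, mul_comm]
  have hdg : (Matrix.diagonal d).mulVec c = fun i => d i * c i := by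
    funext i; rw [Matrix.mulVec_diagonal]
  have hAw : A.mulVec w = U.mulVec (fun i => d i * c i) := by
    rw [hwc, Matrix.mulVec_mulVec, hAU, ← Matrix.mulVec_mulVec, hdg]
  have hEw : E.mulVec w = U.mulVec (fun i => (e j - d i) * c i) := by
    have h1 : E.mulVec w = (A + E).mulVec w - A.mulVec w := by
      rw [Matrix.add_mulVec]; abel
    rw [h1, heig, hAw]
    have h2 : (fun k => e j * w k) = U.mulVec (fun i => e j * c i) := by
      rw [hwc]
      funext k
      simp only [Matrix.mulVec, dotProduct, Finset.mul_sum]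
      apply Finset.sum_congr rfl; intro i _; ring
    rw [h2]
    funext k
    simp only [Pi.sub_apply, Matrix.mulVec, dotProduct, ← Finset.sum_sub_distrib]
    apply Finset.sum_congr rfl; intro i _; ring
  have hEnorm : (E.mulVec w) ⬝ᵥ (E.mulVec w) = ∑ i, (e j - d i)^2 * c i ^2 := by
    rw [hEw, mulVec_dot_mulVec_of_orth hU1]
    simp only [dotProduct]
    apply Finset.sum_congr rfl; intro i _; ring
  have hbound := hEop w
  rw [hEnorm, hww, mul_one] at hbound
  obtain ⟨i0, hi0⟩ : ∃ i0, c i0 ≠ 0 := by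
    by_contra hall
    push_neg at hall
    have h : c ⬝ᵥ c = 0 := by simp [dotProduct, hall]
    rw [hcc] at h; norm_num at h
  have hstrict : ε^2 < ∑ i, (e j - d i)^2 * c i ^2 := by
    have h1 : ∀ i ∈ Finset.univ, ε^2 * c i ^2 ≤ (e j - d i)^2 * c i ^2 := by
      intro i _
      apply mul_le_mul_of_nonneg_right _ (sq_nonneg _)
      nlinarith [abs_nonneg (e j - d i), sq_abs (e j - d i), hcon i]
    have h2 : ε^2 * c i0 ^2 < (e j - d i0)^2 * c i0 ^2 := by
      apply mul_lt_mul_of_pos_right _ (by positivity)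
      nlinarith [abs_nonneg (e j - d i0), sq_abs (e j - d i0), hcon i0]
    calc ε^2 = ε^2 * (c ⬝ᵥ c) := by rw [hcc]; ring
      _ = ∑ i, ε^2 * c i ^2 := by
          simp only [dotProduct, Finset.mul_sum]
          apply Finset.sum_congr rfl; intro i _; ring
      _ < ∑ i, (e j - d i)^2 * c i ^2 :=
          Finset.sum_lt_sum h1 ⟨i0, Finset.mem_univ i0, h2⟩
  linarith

lemma abs_quad_le (E : Matrix n n ℝ) (ε : ℝ) (hε : 0 ≤ ε)
    (hEop : ∀ v : n → ℝ, (E.mulVec v) ⬝ᵥ (E.mulVec v) ≤ ε^2 * (v ⬝ᵥ v))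
    (v : n → ℝ) : |v ⬝ᵥ E.mulVec v| ≤ ε * (v ⬝ᵥ v) := by
  have hCS : (v ⬝ᵥ E.mulVec v)^2 ≤ (v ⬝ᵥ v) * ((E.mulVec v) ⬝ᵥ (E.mulVec v)) := by
    have h := Finset.sum_mul_sq_le_sq_mul_sq Finset.univ v (E.mulVec v)
    simpa [dotProduct, pow_two] using h
  have hvv : 0 ≤ v ⬝ᵥ v := by
    simp only [dotProduct]
    exact Finset.sum_nonneg fun i _ => mul_self_nonneg _
  have h2 : (v ⬝ᵥ E.mulVec v)^2 ≤ (ε * (v ⬝ᵥ v))^2 := by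
    calc (v ⬝ᵥ E.mulVec v)^2 ≤ (v ⬝ᵥ v) * ((E.mulVec v) ⬝ᵥ (E.mulVec v)) := hCS
      _ ≤ (v ⬝ᵥ v) * (ε^2 * (v ⬝ᵥ v)) := mul_le_mul_of_nonneg_left (hEop v) hvv
      _ = (ε * (v ⬝ᵥ v))^2 := by ring
  have h3 : 0 ≤ ε * (v ⬝ᵥ v) := mul_nonneg hε hvv
  nlinarith [abs_nonneg (v ⬝ᵥ E.mulVec v), sq_abs (v ⬝ᵥ E.mulVec v)]

lemma count_stab
    (A E U W : Matrix n n ℝ) (d e : n → ℝ) (δ ε : ℝ)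
    (hδ : 0 < δ) (hε : 0 ≤ ε) (hεδ : ε ≤ δ/5)
    (hU1 : Uᵀ * U = 1) (hUU : U * Uᵀ = 1) (hAU : A * U = U * Matrix.diagonal d)
    (hW1 : Wᵀ * W = 1) (hAEW : (A + E) * W = W * Matrix.diagonal e)
    (hEop : ∀ v : n → ℝ, (E.mulVec v) ⬝ᵥ (E.mulVec v) ≤ ε^2 * (v ⬝ᵥ v))
    (t : ℝ) (ht : ∀ i, δ/2 ≤ |d i - t|) :
    (Finset.univ.filter fun j => e j < t).card = (Finset.univ.filter fun i => d i < t).card := by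
  have habs := abs_quad_le E ε hε hEop
  have hform1 : ∀ v : n → ℝ, v ⬝ᵥ (A + E).mulVec v ≤ v ⬝ᵥ A.mulVec v + ε * (v ⬝ᵥ v) := by
    intro v
    rw [Matrix.add_mulVec, dotProduct_add]
    have h := (abs_le.mp (habs v)).2
    linarith
  have hform2 : ∀ v : n → ℝ, v ⬝ᵥ A.mulVec v ≤ v ⬝ᵥ (A + E).mulVec v + ε * (v ⬝ᵥ v) := by
    intro v
    rw [Matrix.add_mulVec, dotProduct_add]
    have h := (abs_le.mp (habs v)).1
    linarith
  have hres : ∀ j, ∃ i, |e j - d i| ≤ ε :=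
    resolvent_lemma A E U W d e ε hε hU1 hUU hAU hW1 hAEW hEop
  apply le_antisymm
  · apply card_le_card_of_gap (A + E) A W U e d _ _ hW1 hU1 hAEW hAU
      (t - δ/2 + ε) t ε (by linarith)
    · intro j hj
      rw [Finset.mem_filter] at hj
      obtain ⟨i, hi⟩ := hres j
      have h5 := abs_le.mp hi
      rcases le_abs.mp (ht i) with h | h
      · exfalso; linarith [hj.2]
      · linarith
    · intro j hj
      rw [Finset.mem_filter] at hj
      push_neg at hj
      exact hj (Finset.mem_univ j)
    · exact hform2
  · apply card_le_card_of_gap A (A + E) U W d e _ _ hU1 hW1 hAU hAEW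
      (t - δ/2) t ε (by linarith)
    · intro i hi
      rw [Finset.mem_filter] at hi
      rcases le_abs.mp (ht i) with h | h
      · exfalso; linarith [hi.2]
      · linarith
    · intro j hj
      rw [Finset.mem_filter] at hj
      push_neg at hj
      exact hj (Finset.mem_univ j)
    · exact hform1

end Stab

section Clusters

set_option linter.unusedSectionVars false
set_option maxHeartbeats 1000000

open Finset

variable {n : Type*} [Fintype n] [DecidableEq n]

lemma count_clusters
    (d e : n → ℝ) (δ ε : ℝ) (hδ : 0 < δ) (hε : 0 ≤ ε) (hεδ : ε ≤ δ/5)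
    (G : Finset n)
    (hsepG : ∀ i ∈ G, ∀ i' ∉ G, δ ≤ |d i - d i'|)
    (hres : ∀ j, ∃ i, |e j - d i| ≤ ε)
    (hstab : ∀ t : ℝ, (∀ i, δ/2 ≤ |d i - t|) →
      (Finset.univ.filter fun j => e j < t).card = (Finset.univ.filter fun i => d i < t).card) :
    (Finset.univ.filter fun j => ∃ i ∈ G, |e j - d i| ≤ ε).card = G.card := by
  classical
  rcases isEmpty_or_nonempty n with hn | hn
  · have h1 : G = ∅ := Finset.eq_empty_of_isEmpty G
    have h2 : (Finset.univ.filter fun j => ∃ i ∈ G, |e j - d i| ≤ ε) = ∅ :=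
      Finset.eq_empty_of_isEmpty _
    rw [h2, h1]
  set S : Finset ℝ := Finset.image d Finset.univ with hS
  have hSne : S.Nonempty := ⟨d (Classical.arbitrary n), Finset.mem_image_of_mem d (Finset.mem_univ _)⟩
  have hSmem : ∀ i, d i ∈ S := fun i => Finset.mem_image_of_mem d (Finset.mem_univ i)
  set Ldr : Finset ℝ := S.filter (fun x => ∀ y ∈ S, ¬(x - δ < y ∧ y < x)) with hLdr
  have hLdrS : Ldr ⊆ S := Finset.filter_subset _ _
  have hgap : ∀ ℓ ∈ Ldr, ∀ x ∈ S, x < ℓ → x ≤ ℓ - δ := by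
    intro ℓ hℓ x hx hxℓ
    rw [hLdr, Finset.mem_filter] at hℓ
    have := hℓ.2 x hx
    by_contra hcon
    push_neg at hcon
    exact this ⟨by linarith, hxℓ⟩
  have hmin : S.min' hSne ∈ Ldr := by
    rw [hLdr, Finset.mem_filter]
    refine ⟨S.min'_mem hSne, fun y hy hcon => ?_⟩
    have := S.min'_le y hy
    linarith [hcon.2]
  have hleadne : ∀ x, x ∈ S → (Ldr.filter (· ≤ x)).Nonempty := by
    intro x hx
    exact ⟨S.min' hSne, Finset.mem_filter.mpr ⟨hmin, S.min'_le x hx⟩⟩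
  set lead : ℝ → ℝ := fun x => ((Ldr.filter (· ≤ x)).max).getD 0 with hleaddef
  set nxt : ℝ → ℝ := fun ℓ => ((Ldr.filter (fun y => ℓ < y)).min).getD (S.max' hSne + δ)
    with hnxtdef
  have hlead_spec : ∀ x, x ∈ S →
      lead x ∈ Ldr ∧ lead x ≤ x ∧ ∀ ℓ ∈ Ldr, ℓ ≤ x → ℓ ≤ lead x := by
    intro x hx
    obtain ⟨m, hm⟩ := Finset.max_of_nonempty (hleadne x hx)
    have hlx : lead x = m := by simp only [hleaddef]; rw [hm]; rfl
    have hmmem := Finset.mem_of_max hm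
    rw [Finset.mem_filter] at hmmem
    refine ⟨hlx ▸ hmmem.1, hlx ▸ hmmem.2, ?_⟩
    intro ℓ hℓ hℓx
    have h := Finset.le_max (s := Ldr.filter (· ≤ x)) (a := ℓ)
      (Finset.mem_filter.mpr ⟨hℓ, hℓx⟩)
    rw [hm] at h
    rw [hlx]
    exact_mod_cast h
  have hlead_of_ldr : ∀ x, x ∈ Ldr → lead x = x := by
    intro x hx
    have hspec := hlead_spec x (hLdrS hx)
    exact le_antisymm hspec.2.1 (hspec.2.2 x hx le_rfl)
  have hnxt_spec : ∀ ℓ, (ℓ < nxt ℓ ∧ (∀ ℓ' ∈ Ldr, ℓ < ℓ' → nxt ℓ ≤ ℓ')) ∨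
      ((Ldr.filter (fun y => ℓ < y)) = ∅ ∧ nxt ℓ = S.max' hSne + δ) := by
    intro ℓ
    rcases Finset.eq_empty_or_nonempty (Ldr.filter (fun y => ℓ < y)) with hem | hne
    · right
      refine ⟨hem, ?_⟩
      simp only [hnxtdef]; rw [hem]; rfl
    · left
      obtain ⟨m, hm⟩ := Finset.min_of_nonempty hne
      have hlx : nxt ℓ = m := by simp only [hnxtdef]; rw [hm]; rfl
      have hmmem := Finset.mem_of_min hm
      rw [Finset.mem_filter] at hmmem
      constructor
      · rw [hlx]; exact hmmem.2
      · intro ℓ' hℓ' hlt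
        have h := Finset.min_le (Finset.mem_filter.mpr ⟨hℓ', hlt⟩)
        rw [hm] at h
        rw [hlx]
        exact_mod_cast h
  have hnxt_mem_or : ∀ ℓ, (nxt ℓ ∈ Ldr ∧ ℓ < nxt ℓ) ∨
      ((∀ ℓ' ∈ Ldr, ¬ ℓ < ℓ') ∧ nxt ℓ = S.max' hSne + δ) := by
    intro ℓ
    rcases Finset.eq_empty_or_nonempty (Ldr.filter (fun y => ℓ < y)) with hem | hne
    · right
      refine ⟨fun ℓ' hℓ' hlt => ?_, by simp only [hnxtdef]; rw [hem]; rfl⟩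
      have : ℓ' ∈ Ldr.filter (fun y => ℓ < y) := Finset.mem_filter.mpr ⟨hℓ', hlt⟩
      rw [hem] at this
      exact absurd this (Finset.notMem_empty _)
    · left
      obtain ⟨m, hm⟩ := Finset.min_of_nonempty hne
      have hlx : nxt ℓ = m := by simp only [hnxtdef]; rw [hm]; rfl
      have hmmem := Finset.mem_of_min hm
      rw [Finset.mem_filter] at hmmem
      exact ⟨hlx ▸ hmmem.1, hlx ▸ hmmem.2⟩
  have hnxt_gt : ∀ ℓ ∈ Ldr, ℓ < nxt ℓ := by
    intro ℓ hℓ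
    rcases hnxt_mem_or ℓ with h | h
    · exact h.2
    · rw [h.2]
      have := S.le_max' ℓ (hLdrS hℓ)
      linarith
  have hnxt_le : ∀ ℓ, ∀ ℓ' ∈ Ldr, ℓ < ℓ' → nxt ℓ ≤ ℓ' := by
    intro ℓ ℓ' hℓ' hlt
    rcases hnxt_spec ℓ with h | h
    · exact h.2 ℓ' hℓ' hlt
    · exfalso
      have : ℓ' ∈ Ldr.filter (fun y => ℓ < y) := Finset.mem_filter.mpr ⟨hℓ', hlt⟩
      rw [h.1] at this
      exact absurd this (Finset.notMem_empty _)
  -- the lower cut of each leader's interval is δ/2-free of S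
  have hafree : ∀ ℓ ∈ Ldr, ∀ x ∈ S, δ/2 ≤ |x - (ℓ - δ/2)| := by
    intro ℓ hℓ x hx
    rcases lt_or_ge x ℓ with h | h
    · have := hgap ℓ hℓ x hx h
      rw [abs_of_nonpos (by linarith)]
      linarith
    · rw [abs_of_nonneg (by linarith)]
      linarith
  -- the upper cut too
  have hbfree : ∀ ℓ, ∀ x ∈ S, δ/2 ≤ |x - (nxt ℓ - δ/2)| := by
    intro ℓ x hx
    rcases hnxt_mem_or ℓ with h | h
    · rcases lt_or_ge x (nxt ℓ) with h2 | h2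
      · have := hgap (nxt ℓ) h.1 x hx h2
        rw [abs_of_nonpos (by linarith)]
        linarith
      · rw [abs_of_nonneg (by linarith)]
        linarith
    · rw [h.2]
      have := S.le_max' x hx
      rw [abs_of_nonpos (by linarith)]
      linarith
  -- every point of S lies well within its leader's interval
  have hup : ∀ x, x ∈ S → x ≤ nxt (lead x) - δ := by
    intro x hx
    have hspec := hlead_spec x hx
    rcases hnxt_mem_or (lead x) with h | h
    · have hxlt : x < nxt (lead x) := by
        by_contra hcon
        push_neg at hcon
        have := hspec.2.2 (nxt (lead x)) h.1 hcon
        linarith [h.2]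
      have := hgap (nxt (lead x)) h.1 x hx hxlt
      linarith
    · rw [h.2]
      have := S.le_max' x hx
      linarith
  have hdIv : ∀ x, x ∈ S → lead x - δ/2 < x ∧ x < nxt (lead x) - δ/2 := by
    intro x hx
    have hspec := hlead_spec x hx
    have := hup x hx
    constructor <;> [linarith [hspec.2.1]; linarith]
  -- L3d : interval membership determines the leader
  have hlead_eq : ∀ x, x ∈ S → ∀ ℓ ∈ Ldr, ℓ - δ/2 < x → x < nxt ℓ - δ/2 → lead x = ℓ := by
    intro x hx ℓ hℓ ha hb
    have hxge : ℓ ≤ x := by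
      have := hafree ℓ hℓ x hx
      rcases le_abs.mp this with h | h
      · linarith
      · linarith
    have hspec := hlead_spec x hx
    have h1 : ℓ ≤ lead x := hspec.2.2 ℓ hℓ hxge
    rcases eq_or_lt_of_le h1 with h | h
    · exact h.symm
    · exfalso
      have := hnxt_le ℓ (lead x) hspec.1 h
      linarith [hspec.2.1]
  -- close values of S have the same group
  have hclose : ∀ x y : ℝ, x ∈ S → y ∈ S → |x - y| < δ →
      ((∃ i ∈ G, d i = x) ↔ (∃ i ∈ G, d i = y)) := by
    have key : ∀ x y : ℝ, x ∈ S → y ∈ S → |x - y| < δ →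
        (∃ i ∈ G, d i = x) → (∃ i ∈ G, d i = y) := by
      intro x y hx hy hxy ⟨i, hiG, hix⟩
      rw [hS, Finset.mem_image] at hy
      obtain ⟨i', _, hi'y⟩ := hy
      by_cases hi' : i' ∈ G
      · exact ⟨i', hi', hi'y⟩
      · exfalso
        have := hsepG i hiG i' hi'
        rw [hix, hi'y] at this
        linarith
    intro x y hx hy hxy
    exact ⟨key x y hx hy hxy, key y x hy hx (by rwa [abs_sub_comm])⟩
  -- same cluster, same group (strong induction on the number of elements below)
  have hsame : ∀ k : ℕ, ∀ x, x ∈ S → (S.filter (fun z => z ≤ x)).card ≤ k →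
      ((∃ i ∈ G, d i = x) ↔ (∃ i ∈ G, d i = lead x)) := by
    intro k
    induction k with
    | zero =>
      intro x hx hk
      exfalso
      have : x ∈ S.filter (fun z => z ≤ x) := Finset.mem_filter.mpr ⟨hx, le_rfl⟩
      have := Finset.card_pos.mpr ⟨x, this⟩
      omega
    | succ k ih =>
      intro x hx hk
      by_cases hxl : x ∈ Ldr
      · rw [hlead_of_ldr x hxl]
      · have hnl : ¬ (∀ y ∈ S, ¬(x - δ < y ∧ y < x)) := by
          intro hall
          exact hxl (Finset.mem_filter.mpr ⟨hx, hall⟩)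
        push_neg at hnl
        obtain ⟨y, hyS, hy1, hy2⟩ := hnl
        have hxyclose : |x - y| < δ := by
          rw [abs_of_nonneg (by linarith)]
          linarith
        have hfilt : Ldr.filter (· ≤ x) = Ldr.filter (· ≤ y) := by
          ext ℓ
          simp only [Finset.mem_filter]
          constructor
          · rintro ⟨hℓ, hℓx⟩
            refine ⟨hℓ, ?_⟩
            by_contra hcon
            push_neg at hcon
            have := hgap ℓ hℓ y hyS hcon
            linarith
          · rintro ⟨hℓ, hℓy⟩
            exact ⟨hℓ, by linarith⟩
        have hleadxy : lead x = lead y := by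
          rw [hleaddef]
          simp only
          rw [hfilt]
        have hmeas : (S.filter (fun z => z ≤ y)).card ≤ k := by
          have hsub : S.filter (fun z => z ≤ y) ⊆ (S.filter (fun z => z ≤ x)).erase x := by
            intro z hz
            rw [Finset.mem_filter] at hz
            rw [Finset.mem_erase, Finset.mem_filter]
            exact ⟨by intro h; rw [h] at hz; linarith [hz.2], hz.1, by linarith [hz.2]⟩
          have h1 := Finset.card_le_card hsub
          have h2 : x ∈ S.filter (fun z => z ≤ x) := Finset.mem_filter.mpr ⟨hx, le_rfl⟩
          rw [Finset.card_erase_of_mem h2] at h1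
          omega
        rw [hclose x y hx hyS hxyclose, hleadxy]
        exact ih y hyS hmeas
  have hsame' : ∀ x, x ∈ S → ((∃ i ∈ G, d i = x) ↔ (∃ i ∈ G, d i = lead x)) :=
    fun x hx => hsame (S.filter (fun z => z ≤ x)).card x hx le_rfl
  -- counting in each interval agrees
  have hcnt : ∀ ℓ ∈ Ldr,
      (Finset.univ.filter fun j => ℓ - δ/2 < e j ∧ e j < nxt ℓ - δ/2).card =
      (Finset.univ.filter fun i => ℓ - δ/2 < d i ∧ d i < nxt ℓ - δ/2).card := by
    intro ℓ hℓ
    set a := ℓ - δ/2 with hadef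
    set b := nxt ℓ - δ/2 with hbdef
    clear_value a b
    have hdfa : ∀ i, δ/2 ≤ |d i - a| := fun i => by
      rw [hadef]; exact hafree ℓ hℓ (d i) (hSmem i)
    have hdfb : ∀ i, δ/2 ≤ |d i - b| := fun i => by
      rw [hbdef]; exact hbfree ℓ (d i) (hSmem i)
    have hda : ∀ i, d i ≠ a := by
      intro i h
      have := hdfa i
      rw [h] at this
      simp at this
      linarith
    have hea : ∀ j, e j ≠ a := by
      intro j h
      obtain ⟨i, hi⟩ := hres j
      have h2 := hdfa i
      rw [h] at hi
      have h4 := (abs_le.mp hi).1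
      have h5 := (abs_le.mp hi).2
      rcases le_abs.mp h2 with h3 | h3
      · linarith
      · linarith
    have hsplit : ∀ (f : n → ℝ), (∀ i, f i ≠ a) → a ≤ b →
        (Finset.univ.filter fun i => f i < b).card =
        (Finset.univ.filter fun i => f i < a).card +
        (Finset.univ.filter fun i => a < f i ∧ f i < b).card := by
      intro f hf hab
      rw [← Finset.card_union_of_disjoint]
      · congr 1
        ext i
        simp only [Finset.mem_filter, Finset.mem_union, Finset.mem_univ, true_and]
        constructor
        · intro h
          rcases lt_trichotomy (f i) a with h2 | h2 | h2
          · left; exact h2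
          · exact absurd h2 (hf i)
          · right; exact ⟨h2, h⟩
        · rintro (h | h)
          · linarith
          · exact h.2
      · rw [Finset.disjoint_left]
        intro i h1 h2
        rw [Finset.mem_filter] at h1 h2
        linarith [h1.2, h2.1]
    have hab : a ≤ b := by
      have := hnxt_gt ℓ hℓ
      rw [hadef, hbdef]
      linarith
    have h1 := hsplit d hda hab
    have h2 := hsplit e hea hab
    have h3 := hstab a hdfa
    have h4 := hstab b hdfb
    omega
  -- group-1 leaders
  set L1 : Finset ℝ := Ldr.filter (fun ℓ => ∃ i ∈ G, d i = ℓ) with hL1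
  -- the two biUnion identities
  have hGbi : G = L1.biUnion (fun ℓ =>
      Finset.univ.filter fun i => ℓ - δ/2 < d i ∧ d i < nxt ℓ - δ/2) := by
    ext i
    simp only [Finset.mem_biUnion, Finset.mem_filter, Finset.mem_univ, true_and]
    constructor
    · intro hiG
      refine ⟨lead (d i), ?_, ?_⟩
      · rw [hL1, Finset.mem_filter]
        refine ⟨(hlead_spec (d i) (hSmem i)).1, ?_⟩
        exact (hsame' (d i) (hSmem i)).mp ⟨i, hiG, rfl⟩
      · exact hdIv (d i) (hSmem i)
    · rintro ⟨ℓ, hℓ, ha, hb⟩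
      rw [hL1, Finset.mem_filter] at hℓ
      have hle := hlead_eq (d i) (hSmem i) ℓ hℓ.1 ha hb
      have := (hsame' (d i) (hSmem i)).mpr (hle ▸ hℓ.2)
      obtain ⟨i', hi'G, hi'⟩ := this
      by_contra hiG
      have := hsepG i' hi'G i hiG
      rw [hi'] at this
      simp at this
      linarith
  have hJbi : (Finset.univ.filter fun j => ∃ i ∈ G, |e j - d i| ≤ ε) =
      L1.biUnion (fun ℓ =>
      Finset.univ.filter fun j => ℓ - δ/2 < e j ∧ e j < nxt ℓ - δ/2) := by
    ext j
    simp only [Finset.mem_biUnion, Finset.mem_filter, Finset.mem_univ, true_and]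
    constructor
    · rintro ⟨i, hiG, hie⟩
      refine ⟨lead (d i), ?_, ?_, ?_⟩
      · rw [hL1, Finset.mem_filter]
        exact ⟨(hlead_spec (d i) (hSmem i)).1,
          (hsame' (d i) (hSmem i)).mp ⟨i, hiG, rfl⟩⟩
      · have h1 := (hlead_spec (d i) (hSmem i)).2.1
        have h2 := abs_le.mp hie
        linarith [h2.1]
      · have h1 := hup (d i) (hSmem i)
        have h2 := abs_le.mp hie
        linarith [h2.2]
    · rintro ⟨ℓ, hℓ, ha, hb⟩
      rw [hL1, Finset.mem_filter] at hℓ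
      obtain ⟨i0, hi0⟩ := hres j
      have hi0a : ℓ - δ/2 < d i0 := by
        have h1 := hafree ℓ hℓ.1 (d i0) (hSmem i0)
        have h2 := abs_le.mp hi0
        rcases le_abs.mp h1 with h | h
        · linarith
        · linarith
      have hi0b : d i0 < nxt ℓ - δ/2 := by
        have h1 := hbfree ℓ (d i0) (hSmem i0)
        have h2 := abs_le.mp hi0
        rcases le_abs.mp h1 with h | h
        · linarith
        · linarith
      have hle := hlead_eq (d i0) (hSmem i0) ℓ hℓ.1 hi0a hi0b
      have := (hsame' (d i0) (hSmem i0)).mpr (hle ▸ hℓ.2)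
      obtain ⟨i1, hi1G, hi1⟩ := this
      exact ⟨i1, hi1G, by rw [hi1]; exact hi0⟩
  -- disjointness of the intervals
  have hdisj : ∀ (f : n → ℝ), (L1 : Set ℝ).PairwiseDisjoint (fun ℓ =>
      Finset.univ.filter fun j => ℓ - δ/2 < f j ∧ f j < nxt ℓ - δ/2) := by
    intro f ℓ hℓ ℓ' hℓ' hne
    simp only [Function.onFun]
    rw [Finset.disjoint_left]
    intro j h1 h2
    rw [Finset.mem_filter] at h1 h2
    have hLa := Finset.mem_coe.mp hℓ
    have hLb := Finset.mem_coe.mp hℓ'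
    rw [hL1, Finset.mem_filter] at hLa hLb
    rcases lt_trichotomy ℓ ℓ' with h | h | h
    · have := hnxt_le ℓ ℓ' hLb.1 h
      linarith [h1.2.2, h2.2.1]
    · exact hne h
    · have := hnxt_le ℓ' ℓ hLa.1 h
      linarith [h1.2.1, h2.2.2]
  rw [hJbi, Finset.card_biUnion (by
    intro ℓ hℓ ℓ' hℓ' hne
    exact hdisj e (by exact_mod_cast hℓ) (by exact_mod_cast hℓ') hne)]
  conv_rhs => rw [hGbi]
  rw [Finset.card_biUnion (by
    intro ℓ hℓ ℓ' hℓ' hne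
    exact hdisj d (by exact_mod_cast hℓ) (by exact_mod_cast hℓ') hne)]
  apply Finset.sum_congr rfl
  intro ℓ hℓ
  rw [hL1, Finset.mem_filter] at hℓ
  exact hcnt ℓ hℓ.1

end Clusters

section Core

set_option linter.unusedSectionVars false
set_option maxHeartbeats 1000000

variable {n : Type*} [Fintype n] [DecidableEq n]

lemma core_bound
    (A E U W : Matrix n n ℝ) (d e : n → ℝ) (δ ε : ℝ)
    (hδ : 0 < δ) (hε : 0 ≤ ε) (hεδ : ε ≤ δ/5)
    (hAs : Aᵀ = A) (hEs : Eᵀ = E)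
    (hU1 : Uᵀ * U = 1) (hAU : A * U = U * Matrix.diagonal d)
    (hW1 : Wᵀ * W = 1) (hAEW : (A + E) * W = W * Matrix.diagonal e)
    (hEop : ∀ v : n → ℝ, (E.mulVec v) ⬝ᵥ (E.mulVec v) ≤ ε^2 * (v ⬝ᵥ v))
    (G : Finset n)
    (hsepG : ∀ i ∈ G, ∀ i' ∉ G, δ ≤ |d i - d i'|) :
    (Finset.univ.filter fun j => ∃ i ∈ G, |e j - d i| ≤ ε).card = G.card ∧
    (G.card : ℝ) * (1 - (ε/(δ - ε))^2) ≤
      ∑ i ∈ G, ∑ j ∈ (Finset.univ.filter fun j => ∃ i' ∈ G, |e j - d i'| ≤ ε),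
        ((Uᵀ * W) i j)^2 := by
  classical
  have hUU : U * Uᵀ = 1 := mul_eq_one_comm.mp hU1
  have hWW : W * Wᵀ = 1 := mul_eq_one_comm.mp hW1
  have hres : ∀ j, ∃ i, |e j - d i| ≤ ε :=
    resolvent_lemma A E U W d e ε hε hU1 hUU hAU hW1 hAEW
      hEop
  have hstab := count_stab A E U W d e δ ε hδ hε hεδ hU1 hUU hAU hW1 hAEW hEop
  have hcount := count_clusters d e δ ε hδ hε hεδ G hsepG hres hstab
  refine ⟨hcount, ?_⟩
  set X : Matrix n n ℝ := Uᵀ * W with hX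
  set Y : Matrix n n ℝ := Uᵀ * E * W with hYdef
  have hδε : 0 < δ - ε := by linarith
  -- key entrywise identity
  have hUA : Uᵀ * A = Matrix.diagonal d * Uᵀ := by
    have h := congrArg Matrix.transpose hAU
    rw [Matrix.transpose_mul, Matrix.transpose_mul, Matrix.diagonal_transpose, hAs] at h
    exact h
  have hY : Y = X * Matrix.diagonal e - Matrix.diagonal d * X := by
    have h1 : Y = Uᵀ * ((A + E) * W) - (Uᵀ * A) * W := by
      rw [Matrix.add_mul, Matrix.mul_add, hYdef, ← Matrix.mul_assoc, ← Matrix.mul_assoc]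
      abel
    rw [h1, hAEW, ← Matrix.mul_assoc, hUA, Matrix.mul_assoc, hX, Matrix.mul_assoc]
  have hYij : ∀ i j, Y i j = (e j - d i) * X i j := by
    intro i j
    rw [hY]
    simp only [Matrix.sub_apply, Matrix.mul_diagonal, Matrix.diagonal_mul]
    ring
  -- row bound for Y
  have hEe : ∀ a b, E a b = E b a := by
    intro a b
    conv_lhs => rw [← hEs]
    rfl
  have hrow : ∀ i, (∑ j, (Y i j)^2) ≤ ε^2 := by
    intro i
    set u : n → ℝ := fun k => U k i with hu
    set z : n → ℝ := E.mulVec u with hz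
    have hcolEU : (fun l => (E * U) l i) = z := by
      rw [col_mul E U i, hz, hu]
    have hT : Yᵀ = Wᵀ * (E * U) := by
      rw [hYdef, Matrix.transpose_mul, Matrix.transpose_mul, Matrix.transpose_transpose, hEs]
    have hYrow : (fun j => Y i j) = Wᵀ.mulVec z := by
      calc (fun j => Y i j) = (fun j => Yᵀ j i) := rfl
        _ = Wᵀ.mulVec (fun l => (E * U) l i) := by rw [hT, col_mul]
        _ = Wᵀ.mulVec z := by rw [hcolEU]
    have h1 : (∑ j, (Y i j)^2) = (Wᵀ.mulVec z) ⬝ᵥ (Wᵀ.mulVec z) := by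
      simp only [dotProduct]
      apply Finset.sum_congr rfl; intro j _
      rw [show Y i j = (Wᵀ.mulVec z) j from congrFun hYrow j]; ring
    rw [h1, transpose_mulVec_dot, Matrix.mulVec_mulVec, hWW, Matrix.one_mulVec]
    have h2 := hEop u
    have h3 : u ⬝ᵥ u = 1 := by
      have h := congrFun (congrFun hU1 i) i
      simp only [Matrix.mul_apply, Matrix.transpose_apply, Matrix.one_apply_eq] at h
      simpa [dotProduct, hu] using h
    rw [h3, mul_one] at h2
    exact h2
  set Jh : Finset n := Finset.univ.filter (fun j => ∃ i' ∈ G, |e j - d i'| ≤ ε) with hJh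
  -- cross separation
  have hcross : ∀ i ∈ G, ∀ j ∉ Jh, δ - ε ≤ |e j - d i| := by
    intro i hi j hj
    rw [hJh, Finset.mem_filter] at hj
    push_neg at hj
    obtain ⟨i0, hi0⟩ := hres j
    have hi0G : i0 ∉ G := fun hmem =>
      absurd hi0 (not_le.mpr (hj (Finset.mem_univ j) i0 hmem))
    have hsep := hsepG i hi i0 hi0G
    have h1 : |d i - d i0| ≤ |e j - d i| + |e j - d i0| := by
      have := abs_sub_le (d i) (e j) (d i0)
      rw [abs_sub_comm (d i) (e j)] at this
      linarith
    linarith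
  -- per-row: the part of the squared row of X outside Jh is small
  have hout : ∀ i ∈ G, (∑ j ∈ Finset.univ.filter (fun j => ¬ (∃ i' ∈ G, |e j - d i'| ≤ ε)),
      (X i j)^2) ≤ ε^2 / (δ - ε)^2 := by
    intro i hi
    have h1 : ∀ j ∈ Finset.univ.filter (fun j => ¬ (∃ i' ∈ G, |e j - d i'| ≤ ε)),
        (X i j)^2 ≤ (Y i j)^2 / (δ - ε)^2 := by
      intro j hj
      have hj' : j ∉ Jh := by
        rw [hJh, Finset.mem_filter]
        rw [Finset.mem_filter] at hj
        intro hcon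
        exact hj.2 hcon.2
      have h2 := hcross i hi j hj'
      have h3 : (δ - ε)^2 ≤ (e j - d i)^2 := by
        have h0 := mul_self_le_mul_self (le_of_lt hδε) h2
        nlinarith [sq_abs (e j - d i)]
      rw [hYij i j, le_div_iff₀ (by positivity : (0:ℝ) < (δ - ε)^2)]
      nlinarith [mul_le_mul_of_nonneg_right h3 (sq_nonneg (X i j))]
    calc (∑ j ∈ Finset.univ.filter (fun j => ¬ (∃ i' ∈ G, |e j - d i'| ≤ ε)), (X i j)^2)
        ≤ ∑ j ∈ Finset.univ.filter (fun j => ¬ (∃ i' ∈ G, |e j - d i'| ≤ ε)),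
            (Y i j)^2 / (δ - ε)^2 := Finset.sum_le_sum h1
      _ ≤ (∑ j, (Y i j)^2) / (δ - ε)^2 := by
          rw [← Finset.sum_div]
          apply div_le_div_of_nonneg_right _ (by positivity)
          · exact Finset.sum_le_sum_of_subset_of_nonneg (Finset.filter_subset _ _)
              (fun j _ _ => sq_nonneg _)
      _ ≤ ε^2 / (δ - ε)^2 := by
          apply div_le_div_of_nonneg_right (hrow i) (by positivity)
  -- full row sums of X² are 1
  have hXrow : ∀ i, (∑ j, (X i j)^2) = 1 := by
    intro i
    have hXX : X * Xᵀ = 1 := by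
      rw [hX, Matrix.transpose_mul, Matrix.transpose_transpose]
      calc Uᵀ * W * (Wᵀ * U) = Uᵀ * (W * Wᵀ * U) := by
            rw [Matrix.mul_assoc, ← Matrix.mul_assoc W Wᵀ U]
        _ = 1 := by rw [hWW, Matrix.one_mul, hU1]
    have h := congrFun (congrFun hXX i) i
    simp only [Matrix.mul_apply, Matrix.transpose_apply, Matrix.one_apply_eq] at h
    rw [← h]
    apply Finset.sum_congr rfl; intro j _; ring
  -- combine
  have hsplit : ∀ i, (∑ j ∈ Jh, (X i j)^2) = 1 -
      (∑ j ∈ Finset.univ.filter (fun j => ¬ (∃ i' ∈ G, |e j - d i'| ≤ ε)), (X i j)^2) := by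
    intro i
    have h := Finset.sum_filter_add_sum_filter_not Finset.univ
      (fun j => ∃ i' ∈ G, |e j - d i'| ≤ ε) (fun j => (X i j)^2)
    rw [hXrow i] at h
    rw [hJh]
    linarith
  have hper : ∀ i ∈ G, 1 - (ε/(δ - ε))^2 ≤ ∑ j ∈ Jh, (X i j)^2 := by
    intro i hi
    rw [hsplit i]
    have := hout i hi
    have h2 : (ε/(δ - ε))^2 = ε^2/(δ - ε)^2 := by rw [div_pow]
    linarith
  calc (G.card : ℝ) * (1 - (ε/(δ - ε))^2)
      = ∑ _i ∈ G, (1 - (ε/(δ - ε))^2) := by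
        rw [Finset.sum_const, nsmul_eq_mul]
    _ ≤ ∑ i ∈ G, ∑ j ∈ Jh, (X i j)^2 := Finset.sum_le_sum hper

end Core

section Final

set_option linter.unusedSectionVars false
set_option maxHeartbeats 2000000

lemma specNorm_mulVec_bound {p : ℕ} (E : Matrix (Fin p) (Fin p) ℝ) (v : Fin p → ℝ) :
    (E.mulVec v) ⬝ᵥ (E.mulVec v) ≤ (specNorm E)^2 * (v ⬝ᵥ v) := by
  have hnorm : ∀ w : Fin p → ℝ, ‖(WithLp.equiv 2 (Fin p → ℝ)).symm w‖^2 = w ⬝ᵥ w := by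
    intro w
    rw [EuclideanSpace.norm_eq, Real.sq_sqrt (Finset.sum_nonneg fun i _ => sq_nonneg _)]
    simp only [dotProduct, WithLp.equiv_symm_apply, Real.norm_eq_abs, sq_abs]
    apply Finset.sum_congr rfl; intro i _; ring
  set f := LinearMap.toContinuousLinearMap (Matrix.toEuclideanLin E) with hf
  set x : EuclideanSpace ℝ (Fin p) := (WithLp.equiv 2 (Fin p → ℝ)).symm v with hx
  have happ : f x = (WithLp.equiv 2 (Fin p → ℝ)).symm (E.mulVec v) := by
    rw [hf, hx]
    simp only [LinearMap.coe_toContinuousLinearMap']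
    exact Matrix.toEuclideanLin_apply_piLp_toLp E v
  have hb := f.le_opNorm x
  rw [happ] at hb
  have h1 : ‖(WithLp.equiv 2 (Fin p → ℝ)).symm (E.mulVec v)‖^2 ≤ (‖f‖ * ‖x‖)^2 := by
    have h0 : (0:ℝ) ≤ ‖(WithLp.equiv 2 (Fin p → ℝ)).symm (E.mulVec v)‖ := norm_nonneg _
    nlinarith [hb]
  rw [hnorm (E.mulVec v)] at h1
  have h2 : (‖f‖ * ‖x‖)^2 = ‖f‖^2 * ‖x‖^2 := by ring
  rw [h2, hx, hnorm v] at h1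
  exact h1

theorem stmt_2 (p r s : ℕ) (hr : 1 ≤ r) (hs : 1 ≤ s) (hp : r + s = p)
    (A E : Matrix (Fin p) (Fin p) ℝ) (hA : A.IsSymm) (hAE : (A + E).IsSymm)
    (Q1 : Matrix (Fin p) (Fin r) ℝ) (Q2 : Matrix (Fin p) (Fin s) ℝ)
    (hQ1 : Q1ᵀ * Q1 = 1) (hQ2 : Q2ᵀ * Q2 = 1) (hQ12 : Q1ᵀ * Q2 = 0)
    (hinv : InvariantColSpace A Q1)
    (hsep : 0 < sep (Q1ᵀ * A * Q1) (Q2ᵀ * A * Q2))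
    (hE : specNorm E ≤ sep (Q1ᵀ * A * Q1) (Q2ᵀ * A * Q2) / 5) :
    ∃ Qhat1 : Matrix (Fin p) (Fin r) ℝ,
      Qhat1ᵀ * Qhat1 = 1 ∧
      InvariantColSpace (A + E) Qhat1 ∧
      Mdist Q1 Qhat1 ≤
        4 * Real.sqrt 2 * specNorm E / sep (Q1ᵀ * A * Q1) (Q2ᵀ * A * Q2) := by
  classical
  set D1 := Q1ᵀ * A * Q1 with hD1
  set D2 := Q2ᵀ * A * Q2 with hD2
  set δ := sep D1 D2 with hδdef
  set ε := specNorm E with hεdef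
  have hδ0 : 0 < δ := hsep
  have hε0 : 0 ≤ ε := norm_nonneg _
  have hεδ : ε ≤ δ/5 := hE
  have hδε : 0 < δ - ε := by linarith
  have hAs : Aᵀ = A := hA
  have hAEs : (A+E)ᵀ = A + E := hAE
  have hEs : Eᵀ = E := by
    have h1 : Aᵀ + Eᵀ = A + E := by rw [← Matrix.transpose_add]; exact hAEs
    rw [hAs] at h1
    exact add_left_cancel h1
  have hEop : ∀ v : Fin p → ℝ, (E.mulVec v) ⬝ᵥ (E.mulVec v) ≤ ε^2 * (v ⬝ᵥ v) :=
    fun v => specNorm_mulVec_bound E v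
  -- invariant subspace gives the block zero
  have hQ21 : Q2ᵀ * Q1 = 0 := by
    have h := congrArg Matrix.transpose hQ12
    rwa [Matrix.transpose_mul, Matrix.transpose_transpose, Matrix.transpose_zero] at h
  have hQ2AQ1 : Q2ᵀ * A * Q1 = 0 := by
    ext a k
    have hmem : A.mulVec (Q1.mulVec (Pi.single k 1)) ∈ LinearMap.range Q1.mulVecLin := by
      apply hinv
      exact ⟨Pi.single k 1, rfl⟩
    obtain ⟨y, hy⟩ := hmem
    rw [Matrix.mulVecLin_apply] at hy
    have h1 : (Q2ᵀ * A * Q1) a k = (Q2ᵀ.mulVec (A.mulVec (Q1.mulVec (Pi.single k 1)))) a := by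
      rw [Matrix.mulVec_mulVec, Matrix.mulVec_mulVec, Matrix.mulVec_single]
      simp
    rw [h1, ← hy, Matrix.mulVec_mulVec, hQ21]
    simp [Matrix.zero_mulVec]
  have hQ1AQ2 : Q1ᵀ * A * Q2 = 0 := by
    have h := congrArg Matrix.transpose hQ2AQ1
    rwa [Matrix.transpose_mul, Matrix.transpose_mul, Matrix.transpose_transpose, hAs,
      Matrix.transpose_zero, ← Matrix.mul_assoc] at h
  -- completeness : Q1 Q1ᵀ + Q2 Q2ᵀ = 1
  set σe : Fin r ⊕ Fin s ≃ Fin p := finSumFinEquiv.trans (finCongr hp) with hσ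
  set Q : Matrix (Fin p) (Fin r ⊕ Fin s) ℝ := Matrix.fromCols Q1 Q2 with hQdef
  have hQtQ : Qᵀ * Q = 1 := by
    rw [hQdef, Matrix.transpose_fromCols, Matrix.fromRows_mul_fromCols,
      hQ1, hQ2, hQ12, hQ21, Matrix.fromBlocks_one]
  have square_orth : ∀ (M : Matrix (Fin p) (Fin r ⊕ Fin s) ℝ), Mᵀ * M = 1 →
      (M.submatrix id ⇑σe.symm)ᵀ * (M.submatrix id ⇑σe.symm) = 1 ∧ M * Mᵀ = 1 := by
    intro M hM
    have h1 : (M.submatrix id ⇑σe.symm)ᵀ * (M.submatrix id ⇑σe.symm) = 1 := by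
      rw [Matrix.transpose_submatrix]
      have h2 := Matrix.submatrix_mul_equiv Mᵀ M ⇑σe.symm (Equiv.refl (Fin p)) ⇑σe.symm
      rw [Equiv.coe_refl] at h2
      rw [h2, hM, Matrix.submatrix_one_equiv]
    refine ⟨h1, ?_⟩
    have h2 : (M.submatrix id ⇑σe.symm) * (M.submatrix id ⇑σe.symm)ᵀ = 1 :=
      mul_eq_one_comm.mp h1
    rw [Matrix.transpose_submatrix] at h2
    have h3 : M.submatrix id ⇑σe.symm * Mᵀ.submatrix ⇑σe.symm id = (M * Mᵀ).submatrix id id :=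
      Matrix.submatrix_mul_equiv M Mᵀ id σe.symm id
    rw [Matrix.submatrix_id_id] at h3
    rw [← h3, h2]
  have hQQt : Q * Qᵀ = 1 := (square_orth Q hQtQ).2
  have hQQsum : Q1 * Q1ᵀ + Q2 * Q2ᵀ = 1 := by
    rw [← hQQt, hQdef, Matrix.transpose_fromCols, Matrix.fromCols_mul_fromRows]
  -- block eigen equations
  have hAQ1 : A * Q1 = Q1 * D1 := by
    have h0 : A * Q1 = (Q1 * Q1ᵀ + Q2 * Q2ᵀ) * (A * Q1) := by rw [hQQsum, Matrix.one_mul]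
    rw [h0, Matrix.add_mul, Matrix.mul_assoc Q1 Q1ᵀ (A * Q1),
      Matrix.mul_assoc Q2 Q2ᵀ (A * Q1), ← Matrix.mul_assoc Q1ᵀ A Q1,
      ← Matrix.mul_assoc Q2ᵀ A Q1, hQ2AQ1, Matrix.mul_zero, add_zero, ← hD1]
  have hAQ2 : A * Q2 = Q2 * D2 := by
    have h0 : A * Q2 = (Q1 * Q1ᵀ + Q2 * Q2ᵀ) * (A * Q2) := by rw [hQQsum, Matrix.one_mul]
    rw [h0, Matrix.add_mul, Matrix.mul_assoc Q1 Q1ᵀ (A * Q2),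
      Matrix.mul_assoc Q2 Q2ᵀ (A * Q2), ← Matrix.mul_assoc Q1ᵀ A Q2,
      ← Matrix.mul_assoc Q2ᵀ A Q2, hQ1AQ2, Matrix.mul_zero, zero_add, ← hD2]
  -- diagonalize the blocks
  have hD1s : D1.IsSymm := by
    show D1ᵀ = D1
    rw [hD1, Matrix.transpose_mul, Matrix.transpose_mul, Matrix.transpose_transpose, hAs,
      ← Matrix.mul_assoc]
  have hD2s : D2.IsSymm := by
    show D2ᵀ = D2
    rw [hD2, Matrix.transpose_mul, Matrix.transpose_mul, Matrix.transpose_transpose, hAs,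
      ← Matrix.mul_assoc]
  obtain ⟨V1, d1, hV1t, hV1V1t, hD1V1⟩ := exists_spec_decomp D1 hD1s
  obtain ⟨V2, d2, hV2t, hV2V2t, hD2V2⟩ := exists_spec_decomp D2 hD2s
  -- eigenvalues and separation
  have hev : ∀ (m : ℕ) (Dm V : Matrix (Fin m) (Fin m) ℝ) (dm : Fin m → ℝ),
      Vᵀ * V = 1 → Dm * V = V * Matrix.diagonal dm → ∀ a, IsEigenvalue Dm (dm a) := by
    intro m Dm V dm hVt hDV a
    refine ⟨fun j => V j a, ?_, ?_⟩
    · intro h0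
      have h := congrFun (congrFun hVt a) a
      simp only [Matrix.mul_apply, Matrix.transpose_apply, Matrix.one_apply_eq] at h
      rw [Finset.sum_eq_zero (fun k _ => by
        have hk := congrFun h0 k
        simp only [Pi.zero_apply] at hk
        rw [hk]; ring)] at h
      norm_num at h
    · rw [← col_mul Dm V a, hDV]
      funext j
      simp only [Matrix.mul_diagonal, Pi.smul_apply, smul_eq_mul]
      ring
  have hseplb : ∀ (a : Fin r) (b : Fin s), δ ≤ |d1 a - d2 b| := by
    intro a b
    rw [hδdef]
    apply csInf_le
    · refine ⟨0, ?_⟩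
      rintro z ⟨μ, ν, _, _, rfl⟩
      exact abs_nonneg _
    · exact ⟨d1 a, d2 b, hev r D1 V1 d1 hV1t hD1V1 a, hev s D2 V2 d2 hV2t hD2V2 b, rfl⟩
  -- assemble U
  set M0 : Matrix (Fin p) (Fin r ⊕ Fin s) ℝ := Matrix.fromCols (Q1 * V1) (Q2 * V2) with hM0
  set U : Matrix (Fin p) (Fin p) ℝ := M0.submatrix id ⇑σe.symm with hUdef
  set dsum : Fin r ⊕ Fin s → ℝ := Sum.elim d1 d2 with hdsum
  set dv : Fin p → ℝ := dsum ∘ ⇑σe.symm with hdv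
  have hM0t : M0ᵀ * M0 = 1 := by
    rw [hM0, Matrix.transpose_fromCols, Matrix.fromRows_mul_fromCols]
    have e11 : (Q1 * V1)ᵀ * (Q1 * V1) = 1 := by
      rw [Matrix.transpose_mul, Matrix.mul_assoc, ← Matrix.mul_assoc Q1ᵀ Q1 V1, hQ1,
        Matrix.one_mul, hV1t]
    have e22 : (Q2 * V2)ᵀ * (Q2 * V2) = 1 := by
      rw [Matrix.transpose_mul, Matrix.mul_assoc, ← Matrix.mul_assoc Q2ᵀ Q2 V2, hQ2,
        Matrix.one_mul, hV2t]
    have e12 : (Q1 * V1)ᵀ * (Q2 * V2) = 0 := by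
      rw [Matrix.transpose_mul, Matrix.mul_assoc, ← Matrix.mul_assoc Q1ᵀ Q2 V2, hQ12,
        Matrix.zero_mul, Matrix.mul_zero]
    have e21 : (Q2 * V2)ᵀ * (Q1 * V1) = 0 := by
      rw [Matrix.transpose_mul, Matrix.mul_assoc, ← Matrix.mul_assoc Q2ᵀ Q1 V1, hQ21,
        Matrix.zero_mul, Matrix.mul_zero]
    rw [e11, e12, e21, e22, Matrix.fromBlocks_one]
  have hU1 : Uᵀ * U = 1 := by
    rw [hUdef]
    exact (square_orth M0 hM0t).1
  have hblockdiag : Matrix.fromBlocks (Matrix.diagonal d1) 0 0 (Matrix.diagonal d2)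
      = Matrix.diagonal dsum := by
    ext (i | i) (j | j) <;>
      simp [Matrix.diagonal, Matrix.fromBlocks, hdsum, Matrix.one_apply, Sum.inl.injEq,
        Sum.inr.injEq]
  have hAM0 : A * M0 = M0 * Matrix.diagonal dsum := by
    have hA1 : A * (Q1 * V1) = (Q1 * V1) * Matrix.diagonal d1 := by
      rw [← Matrix.mul_assoc, hAQ1, Matrix.mul_assoc, hD1V1, ← Matrix.mul_assoc]
    have hA2 : A * (Q2 * V2) = (Q2 * V2) * Matrix.diagonal d2 := by
      rw [← Matrix.mul_assoc, hAQ2, Matrix.mul_assoc, hD2V2, ← Matrix.mul_assoc]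
    rw [← hblockdiag, hM0, Matrix.mul_fromCols, Matrix.fromCols_mul_fromBlocks, hA1, hA2,
      Matrix.mul_zero, Matrix.mul_zero, add_zero, zero_add]
  have hAU : A * U = U * Matrix.diagonal dv := by
    have h1 : A * U = (A * M0).submatrix id ⇑σe.symm := by
      have h := Matrix.submatrix_mul_equiv A M0 (id : Fin p → Fin p) (Equiv.refl (Fin p))
        ⇑σe.symm
      rw [Equiv.coe_refl] at h
      rw [Matrix.submatrix_id_id] at h
      rw [hUdef, ← h]
    have h2 : U * Matrix.diagonal dv = (M0 * Matrix.diagonal dsum).submatrix id ⇑σe.symm := by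
      have hd : Matrix.diagonal dv = (Matrix.diagonal dsum).submatrix ⇑σe.symm ⇑σe.symm := by
        rw [Matrix.submatrix_diagonal_equiv, hdv]
      rw [hd, hUdef, Matrix.submatrix_mul_equiv]
    rw [h1, h2, hAM0]
  -- the group of column indices
  set G : Finset (Fin p) := Finset.univ.filter (fun j => (σe.symm j).isLeft = true) with hG
  have hGimg : G = (Finset.univ : Finset (Fin r)).image (fun a => σe (Sum.inl a)) := by
    ext i
    constructor
    · intro hiG
      rw [hG, Finset.mem_filter] at hiG
      rcases hsl : σe.symm i with a | b
      · apply Finset.mem_image.mpr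
        exact ⟨a, Finset.mem_univ a, by rw [← hsl, Equiv.apply_symm_apply]⟩
      · exfalso
        rw [hsl] at hiG
        simp at hiG
    · intro hi
      obtain ⟨a, _, rfl⟩ := Finset.mem_image.mp hi
      rw [hG, Finset.mem_filter]
      refine ⟨Finset.mem_univ _, ?_⟩
      rw [Equiv.symm_apply_apply]
      rfl
  have hσinj : Function.Injective (fun a : Fin r => σe (Sum.inl a)) := by
    intro a a' h
    exact Sum.inl_injective (σe.injective h)
  have hGcard : G.card = r := by
    rw [hGimg, Finset.card_image_of_injective _ hσinj, Finset.card_univ, Fintype.card_fin]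
  have hUcol : ∀ (k : Fin p) (a : Fin r), U k (σe (Sum.inl a)) = (Q1 * V1) k a := by
    intro k a
    rw [hUdef]
    simp only [Matrix.submatrix_apply, id_eq, Equiv.symm_apply_apply]
    rw [hM0]
    rfl
  have hdvl : ∀ a : Fin r, dv (σe (Sum.inl a)) = d1 a := by
    intro a
    rw [hdv]
    simp only [Function.comp_apply, Equiv.symm_apply_apply]
    rfl
  have hdvr : ∀ b : Fin s, dv (σe (Sum.inr b)) = d2 b := by
    intro b
    rw [hdv]
    simp only [Function.comp_apply, Equiv.symm_apply_apply]
    rfl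
  have hsepG : ∀ i ∈ G, ∀ i' ∉ G, δ ≤ |dv i - dv i'| := by
    intro i hi i' hi'
    rw [hG, Finset.mem_filter] at hi hi'
    rcases hsl : σe.symm i with a | b
    · rcases hsl' : σe.symm i' with a' | b'
      · exfalso
        apply hi'
        exact ⟨Finset.mem_univ i', by rw [hsl']; rfl⟩
      · have h1 : i = σe (Sum.inl a) := by rw [← hsl, Equiv.apply_symm_apply]
        have h2 : i' = σe (Sum.inr b') := by rw [← hsl', Equiv.apply_symm_apply]
        rw [h1, h2, hdvl, hdvr]
        exact hseplb a b'
    · exfalso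
      have := hi.2
      rw [hsl] at this
      simp at this
  -- diagonalize A + E
  obtain ⟨W, ev, hWt, hWWt, hAEW⟩ := exists_spec_decomp (A + E) hAE
  -- main counting and trace bound
  obtain ⟨hcount, hbound⟩ := core_bound A E U W dv ev δ ε hδ0 hε0 hεδ hAs hEs hU1 hAU
    hWt hAEW hEop G hsepG
  set Jh : Finset (Fin p) := Finset.univ.filter (fun j => ∃ i ∈ G, |ev j - dv i| ≤ ε) with hJh
  have hJr : Jh.card = r := by rw [hJh]; convert hcount.trans hGcard
  set embJ : Fin r → Fin p := fun b => ((Jh.orderIsoOfFin hJr) b : Fin p) with hembJ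
  have hembJ_mem : ∀ b, embJ b ∈ Jh := fun b => ((Jh.orderIsoOfFin hJr) b).2
  have hembJ_inj : Function.Injective embJ := by
    intro b b' h
    have := Subtype.coe_injective (α := Fin p) h
    exact (Jh.orderIsoOfFin hJr).injective this
  set Qhat1 : Matrix (Fin p) (Fin r) ℝ := Matrix.of (fun k b => W k (embJ b)) with hQhatdef
  have hQhat_entry : ∀ k b, Qhat1 k b = W k (embJ b) := fun k b => rfl
  refine ⟨Qhat1, ?_, ?_, ?_⟩
  · -- orthonormal columns
    ext a b
    have h := congrFun (congrFun hWt (embJ a)) (embJ b)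
    simp only [Matrix.mul_apply, Matrix.transpose_apply] at h ⊢
    rw [show (∑ k, Qhat1 k a * Qhat1 k b) = ∑ k, W k (embJ a) * W k (embJ b) from rfl, h]
    by_cases hab : a = b
    · subst hab; simp [Matrix.one_apply]
    · have : embJ a ≠ embJ b := fun hc => hab (hembJ_inj hc)
      simp [Matrix.one_apply, hab, this]
  · -- invariance
    have hABQ : (A + E) * Qhat1 = Qhat1 * Matrix.diagonal (fun b => ev (embJ b)) := by
      ext k b
      have h := congrFun (congrFun hAEW k) (embJ b)
      rw [Matrix.mul_apply, Matrix.mul_diagonal] at h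
      rw [Matrix.mul_apply, Matrix.mul_diagonal]
      exact h
    intro v hv
    obtain ⟨x, hx⟩ := hv
    rw [Matrix.mulVecLin_apply] at hx
    refine ⟨(Matrix.diagonal (fun b => ev (embJ b))).mulVec x, ?_⟩
    rw [Matrix.mulVecLin_apply, Matrix.mulVec_mulVec, ← hABQ, ← Matrix.mulVec_mulVec, hx]
  · -- the distance bound
    set X : Matrix (Fin p) (Fin p) ℝ := Uᵀ * W with hX
    set Nmat : Matrix (Fin r) (Fin r) ℝ := Q1ᵀ * Qhat1 with hN
    set T : ℝ := (Q1 * Q1ᵀ * Qhat1 * Qhat1ᵀ).trace with hT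
    have htr : T = ∑ b, ∑ a, (Nmat a b)^2 := by
      have h1 : Q1 * Q1ᵀ * Qhat1 * Qhat1ᵀ = (Q1 * Nmat) * Qhat1ᵀ := by
        rw [hN, Matrix.mul_assoc Q1 Q1ᵀ Qhat1]
      rw [hT, h1, Matrix.trace_mul_comm, ← Matrix.mul_assoc]
      have h2 : Qhat1ᵀ * Q1 = Nmatᵀ := by
        rw [hN, Matrix.transpose_mul, Matrix.transpose_transpose]
      rw [h2, Matrix.trace]
      simp only [Matrix.diag_apply, Matrix.mul_apply, Matrix.transpose_apply]
      apply Finset.sum_congr rfl; intro b _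
      apply Finset.sum_congr rfl; intro a _
      ring
    -- relate N to X
    have hNR : ∀ a b, Nmat a b = (Q1ᵀ * W) a (embJ b) := by
      intro a b
      rw [hN]
      simp only [Matrix.mul_apply]
      rfl
    have hXrow : ∀ (a : Fin r) (j : Fin p), X (σe (Sum.inl a)) j = (V1ᵀ * (Q1ᵀ * W)) a j := by
      intro a j
      rw [hX]
      simp only [Matrix.mul_apply, Matrix.transpose_apply]
      have h1 : ∀ k, U k (σe (Sum.inl a)) = ∑ c, Q1 k c * V1 c a := by
        intro k
        rw [hUcol k a]
        simp [Matrix.mul_apply]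
      rw [Finset.sum_congr rfl (fun k _ => by rw [h1 k, Finset.sum_mul])]
      rw [Finset.sum_comm]
      apply Finset.sum_congr rfl; intro c _
      rw [Finset.mul_sum]
      apply Finset.sum_congr rfl; intro k _
      ring
    have hcolsum : ∀ b : Fin r, ∑ a, (Nmat a b)^2
        = ∑ a, (X (σe (Sum.inl a)) (embJ b))^2 := by
      intro b
      set Rcol : Fin r → ℝ := fun c => (Q1ᵀ * W) c (embJ b) with hRcol
      have h1 : ∀ a, Nmat a b = Rcol a := fun a => hNR a b
      have h2 : ∀ a, X (σe (Sum.inl a)) (embJ b) = ((V1ᵀ).mulVec Rcol) a := by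
        intro a
        rw [hXrow]
        simp only [Matrix.mul_apply, Matrix.mulVec, dotProduct, hRcol]
      have h3 : ((V1ᵀ).mulVec Rcol) ⬝ᵥ ((V1ᵀ).mulVec Rcol) = Rcol ⬝ᵥ Rcol := by
        apply mulVec_dot_mulVec_of_orth
        rw [Matrix.transpose_transpose]
        exact hV1V1t
      have h4 : ∑ a, (X (σe (Sum.inl a)) (embJ b))^2
          = ((V1ᵀ).mulVec Rcol) ⬝ᵥ ((V1ᵀ).mulVec Rcol) := by
        simp only [dotProduct]
        apply Finset.sum_congr rfl; intro a _
        rw [h2 a]; ring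
      have h5 : ∑ a, (Nmat a b)^2 = Rcol ⬝ᵥ Rcol := by
        simp only [dotProduct]
        apply Finset.sum_congr rfl; intro a _
        rw [h1 a]; ring
      rw [h4, h3, h5]
    -- reindex the double sum
    have hJimg : Jh = (Finset.univ : Finset (Fin r)).image embJ := by
      symm
      apply Finset.eq_of_subset_of_card_le
      · intro j hj
        obtain ⟨b, _, rfl⟩ := Finset.mem_image.mp hj
        exact hembJ_mem b
      · rw [Finset.card_image_of_injective _ hembJ_inj, Finset.card_univ, Fintype.card_fin, hJr]
    have hsum_eq : ∑ i ∈ G, ∑ j ∈ Jh, (X i j)^2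
        = ∑ a : Fin r, ∑ b : Fin r, (X (σe (Sum.inl a)) (embJ b))^2 := by
      rw [hGimg, Finset.sum_image (fun a _ a' _ h => hσinj h)]
      apply Finset.sum_congr rfl; intro a _
      rw [hJimg, Finset.sum_image (fun b _ b' _ h => hembJ_inj h)]
    have hTbound : (r : ℝ) * (1 - (ε/(δ - ε))^2) ≤ T := by
      have h1 : T = ∑ a : Fin r, ∑ b : Fin r, (X (σe (Sum.inl a)) (embJ b))^2 := by
        rw [htr, Finset.sum_congr rfl (fun b _ => hcolsum b)]
        exact Finset.sum_comm
      rw [h1, ← hsum_eq]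
      have h2 := hbound
      rw [hGcard] at h2
      rw [hJh]; convert h2
    -- final numeric computation
    have hr0 : (0:ℝ) < r := by
      have : (1:ℝ) ≤ r := by exact_mod_cast hr
      linarith
    have hfrac : 1 - 1/(r:ℝ) * T ≤ (ε/(δ - ε))^2 := by
      have h2 : (1 - (ε/(δ - ε))^2) * r ≤ T := by rw [mul_comm]; exact hTbound
      have h3 : (1 - (ε/(δ - ε))^2) ≤ T / r := (le_div_iff₀ hr0).mpr h2
      have h4 : 1/(r:ℝ) * T = T / r := by ring
      linarith
    have hMd : Mdist Q1 Qhat1 = Real.sqrt (1 - 1/(r:ℝ) * T) := by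
      rw [Mdist, hT]
    rw [hMd]
    have hstep1 : Real.sqrt (1 - 1/(r:ℝ) * T) ≤ ε/(δ - ε) := by
      calc Real.sqrt (1 - 1/(r:ℝ) * T) ≤ Real.sqrt ((ε/(δ - ε))^2) :=
            Real.sqrt_le_sqrt hfrac
        _ = ε/(δ - ε) := Real.sqrt_sq (div_nonneg hε0 (le_of_lt hδε))
    have hs2 : (1:ℝ) ≤ Real.sqrt 2 := by
      rw [show (1:ℝ) = Real.sqrt 1 from (Real.sqrt_one).symm]
      exact Real.sqrt_le_sqrt (by norm_num)
    have hstep2 : ε/(δ - ε) ≤ 4 * Real.sqrt 2 * ε / δ := by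
      rw [div_le_div_iff₀ hδε hδ0]
      have key2 : ε * δ ≤ 4 * ε * (δ - ε) := by
        nlinarith [mul_nonneg hε0 (show (0:ℝ) ≤ 3*δ - 4*ε by linarith)]
      have key1 : 4 * ε * (δ - ε) ≤ 4 * Real.sqrt 2 * ε * (δ - ε) := by
        nlinarith [mul_nonneg hε0 (le_of_lt hδε)]
      linarith
    linarith

end Final
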